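/- Let U : ℝ^d → ℝ be continuously differentiable, let C₀ be a finite subset of ℝ^d, and let R > 0 be such that every zero of ∇U lying in the closed ball B_R belongs to C₀. Let (μ_ε)_{ε>0} be a family of Borel probability measures on ℝ^d such that liminf_{ε→0⁺} (1/ε) ∫_{B_R} |∇U|² dμ_ε < ∞. Then: (a) for every r > 0, liminf_{ε→0⁺} (1/ε)·μ_ε( B_R \ ∪_{c∈C₀} B_r(c) ) < ∞; and (b) if moreover r > 0 and b > 0 are such that ∪_{c∈C₀} B_r(c) ⊆ B_R and |∇U(y)|² ≥ b·|y − c|² for every c ∈ C₀ and y ∈ B_r(c), then liminf_{ε→0⁺} (1/ε) Σ_{c∈C₀} ∫_{B_r(c)} |y − c|² dμ_ε(y) < ∞. -/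

import Mathlib

open Filter Topology MeasureTheory ENNReal

private lemma liminf_aux {α : Type*} {l : Filter α} [l.NeBot] {c : ℝ≥0∞} (hc : c ≠ ⊤)
    {f g : α → ℝ≥0∞} (h : ∀ x, g x ≤ c * f x) (hf : Filter.liminf f l < ⊤) :
    Filter.liminf g l < ⊤ := by
  have h1 : Filter.liminf g l ≤ Filter.liminf (fun x => c * f x) l :=
    Filter.liminf_le_liminf (Filter.Eventually.of_forall h)
  have h2 : Filter.liminf ((fun _ => c) * f) l ≤
      Filter.limsup (fun _ : α => c) l * Filter.liminf f l :=
    ENNReal.liminf_mul_le (Or.inr hf.ne) (Or.inl (by rw [Filter.limsup_const]; exact hc))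
  rw [Filter.limsup_const] at h2
  calc Filter.liminf g l ≤ c * Filter.liminf f l := h1.trans h2
    _ < ⊤ := ENNReal.mul_lt_top hc.lt_top hf

/-- Concentration estimate: if the probability measures `μ_ε` satisfy
`liminf_{ε→0⁺} ε⁻¹ ∫_{B_R} |∇U|² dμ_ε < ∞`, then (a) for every `r > 0` the mass of
`B_R` away from `r`-balls around the critical points `C₀` is `O(ε)` along a
subsequence, and (b) under a quadratic lower bound on `|∇U|²` near each critical
point, `liminf_{ε→0⁺} ε⁻¹ Σ_{c∈C₀} ∫_{B_r(c)} |y−c|² dμ_ε < ∞`. -/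
theorem stmt13 {d : ℕ}
    (U : EuclideanSpace ℝ (Fin d) → ℝ) (hU : ContDiff ℝ 1 U)
    (C₀ : Finset (EuclideanSpace ℝ (Fin d))) (R : ℝ) (hR : 0 < R)
    (hcrit : ∀ x ∈ Metric.closedBall (0 : EuclideanSpace ℝ (Fin d)) R,
      gradient U x = 0 → x ∈ C₀)
    (μ : ℝ → Measure (EuclideanSpace ℝ (Fin d)))
    (hμ : ∀ ε : ℝ, 0 < ε → IsProbabilityMeasure (μ ε))
    (hfin : Filter.liminf (fun ε =>
        (ENNReal.ofReal ε)⁻¹ *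
          ∫⁻ x in Metric.closedBall (0 : EuclideanSpace ℝ (Fin d)) R,
            ENNReal.ofReal (‖gradient U x‖ ^ 2) ∂(μ ε))
      (𝓝[>] (0:ℝ)) < ⊤) :
    (∀ r : ℝ, 0 < r →
      Filter.liminf (fun ε =>
          (ENNReal.ofReal ε)⁻¹ *
            μ ε (Metric.closedBall (0 : EuclideanSpace ℝ (Fin d)) R \
              ⋃ c ∈ C₀, Metric.closedBall c r))
        (𝓝[>] (0:ℝ)) < ⊤) ∧
    (∀ r b : ℝ, 0 < r → 0 < b →
      (⋃ c ∈ C₀, Metric.closedBall c r) ⊆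
        Metric.closedBall (0 : EuclideanSpace ℝ (Fin d)) R →
      (∀ c ∈ C₀, ∀ y ∈ Metric.closedBall c r,
        b * ‖y - c‖ ^ 2 ≤ ‖gradient U y‖ ^ 2) →
      Filter.liminf (fun ε =>
          (ENNReal.ofReal ε)⁻¹ *
            ∑ c ∈ C₀, ∫⁻ y in Metric.closedBall c r,
              ENNReal.ofReal (‖y - c‖ ^ 2) ∂(μ ε))
        (𝓝[>] (0:ℝ)) < ⊤) := by
  have hgc : Continuous fun x => gradient U x := by
    have h1 : Continuous fun x => fderiv ℝ U x := hU.continuous_fderiv one_ne_zero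
    exact (InnerProductSpace.toDual ℝ
      (EuclideanSpace ℝ (Fin d))).symm.continuous.comp h1
  constructor
  · -- part (a)
    intro r hr
    set K := Metric.closedBall (0 : EuclideanSpace ℝ (Fin d)) R \
      ⋃ c ∈ C₀, Metric.closedBall c r with hK
    by_cases hKe : K = ∅
    · simp only [hKe]
      have : Filter.liminf (fun ε : ℝ =>
          (ENNReal.ofReal ε)⁻¹ * μ ε (∅ : Set (EuclideanSpace ℝ (Fin d))))
          (𝓝[>] (0:ℝ)) = 0 := by
        simp [Filter.liminf_const]
      rw [this]; exact ENNReal.zero_lt_top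
    -- closure K is compact and contains no critical points
    have hScomp : IsCompact (closure K) := by
      refine (isCompact_closedBall (0 : EuclideanSpace ℝ (Fin d)) R).of_isClosed_subset
        isClosed_closure (closure_minimal Set.diff_subset Metric.isClosed_closedBall)
    have hSnz : ∀ x ∈ closure K, gradient U x ≠ 0 := by
      intro x hx hgz
      have hxB : x ∈ Metric.closedBall (0 : EuclideanSpace ℝ (Fin d)) R :=
        closure_minimal Set.diff_subset Metric.isClosed_closedBall hx
      have hxC : x ∈ C₀ := hcrit x hxB hgz
      obtain ⟨y, hyK, hyd⟩ := Metric.mem_closure_iff.mp hx r hr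
      exact hyK.2 (Set.mem_biUnion hxC (by
        simpa [Metric.mem_closedBall, dist_comm] using hyd.le))
    have hSne : (closure K).Nonempty := by
      rcases Set.nonempty_iff_ne_empty.mpr hKe with ⟨y, hy⟩
      exact ⟨y, subset_closure hy⟩
    obtain ⟨x₀, hx₀S, hx₀⟩ := hScomp.exists_isMinOn hSne
      (Continuous.continuousOn (by continuity : Continuous fun x => ‖gradient U x‖ ^ 2))
    set m := ‖gradient U x₀‖ ^ 2 with hm
    have hm0 : 0 < m := pow_pos (norm_pos_iff.mpr (hSnz x₀ hx₀S)) 2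
    have hmne : ENNReal.ofReal m ≠ 0 := by
      simp [ENNReal.ofReal_eq_zero, not_le, hm0]
    have hcne : (ENNReal.ofReal m)⁻¹ ≠ ⊤ := ENNReal.inv_ne_top.mpr hmne
    refine liminf_aux hcne (fun ε => ?_) hfin
    have hKmeas : MeasurableSet K :=
      Metric.isClosed_closedBall.measurableSet.diff
        (MeasurableSet.biUnion C₀.countable_toSet
          (fun c _ => Metric.isClosed_closedBall.measurableSet))
    have h1 : ENNReal.ofReal m * μ ε K ≤
        ∫⁻ x in K, ENNReal.ofReal (‖gradient U x‖ ^ 2) ∂(μ ε) := by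
      rw [← setLIntegral_const K (ENNReal.ofReal m)]
      exact setLIntegral_mono' hKmeas fun x hx =>
        ENNReal.ofReal_le_ofReal (hx₀ (subset_closure hx))
    have h2 : (∫⁻ x in K, ENNReal.ofReal (‖gradient U x‖ ^ 2) ∂(μ ε)) ≤
        ∫⁻ x in Metric.closedBall (0 : EuclideanSpace ℝ (Fin d)) R,
          ENNReal.ofReal (‖gradient U x‖ ^ 2) ∂(μ ε) :=
      lintegral_mono_set Set.diff_subset
    have h3 : μ ε K ≤ (ENNReal.ofReal m)⁻¹ *
        ∫⁻ x in Metric.closedBall (0 : EuclideanSpace ℝ (Fin d)) R,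
          ENNReal.ofReal (‖gradient U x‖ ^ 2) ∂(μ ε) := by
      have := mul_le_mul_right (h1.trans h2) (ENNReal.ofReal m)⁻¹
      rwa [← mul_assoc, ENNReal.inv_mul_cancel hmne ENNReal.ofReal_ne_top, one_mul] at this
    calc (ENNReal.ofReal ε)⁻¹ * μ ε K ≤ (ENNReal.ofReal ε)⁻¹ *
          ((ENNReal.ofReal m)⁻¹ *
            ∫⁻ x in Metric.closedBall (0 : EuclideanSpace ℝ (Fin d)) R,
              ENNReal.ofReal (‖gradient U x‖ ^ 2) ∂(μ ε)) := mul_le_mul_right h3 _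
      _ = (ENNReal.ofReal m)⁻¹ * ((ENNReal.ofReal ε)⁻¹ *
            ∫⁻ x in Metric.closedBall (0 : EuclideanSpace ℝ (Fin d)) R,
              ENNReal.ofReal (‖gradient U x‖ ^ 2) ∂(μ ε)) := by ring
  · -- part (b)
    intro r b hr hb hsub hquad
    have hbne : ENNReal.ofReal b ≠ 0 := by
      simp [ENNReal.ofReal_eq_zero, not_le, hb]
    have hbinv : (ENNReal.ofReal b)⁻¹ ≠ ⊤ := ENNReal.inv_ne_top.mpr hbne
    have hcne : ((C₀.card : ℝ≥0∞) * (ENNReal.ofReal b)⁻¹) ≠ ⊤ :=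
      ENNReal.mul_ne_top (ENNReal.natCast_ne_top _) hbinv
    refine liminf_aux hcne (fun ε => ?_) hfin
    set I := ∫⁻ x in Metric.closedBall (0 : EuclideanSpace ℝ (Fin d)) R,
      ENNReal.ofReal (‖gradient U x‖ ^ 2) ∂(μ ε) with hI
    have hc : ∀ c ∈ C₀,
        (∫⁻ y in Metric.closedBall c r, ENNReal.ofReal (‖y - c‖ ^ 2) ∂(μ ε)) ≤
          (ENNReal.ofReal b)⁻¹ * I := by
      intro c hc
      have hpt : ∀ y ∈ Metric.closedBall c r,
          ENNReal.ofReal (‖y - c‖ ^ 2) ≤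
            (ENNReal.ofReal b)⁻¹ * ENNReal.ofReal (‖gradient U y‖ ^ 2) := by
        intro y hy
        have h1 : ENNReal.ofReal b * ENNReal.ofReal (‖y - c‖ ^ 2) ≤
            ENNReal.ofReal (‖gradient U y‖ ^ 2) := by
          rw [← ENNReal.ofReal_mul hb.le]
          exact ENNReal.ofReal_le_ofReal (hquad c hc y hy)
        have := mul_le_mul_right h1 (ENNReal.ofReal b)⁻¹
        rwa [← mul_assoc, ENNReal.inv_mul_cancel hbne ENNReal.ofReal_ne_top, one_mul] at this
      calc (∫⁻ y in Metric.closedBall c r, ENNReal.ofReal (‖y - c‖ ^ 2) ∂(μ ε))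
          ≤ ∫⁻ y in Metric.closedBall c r,
              (ENNReal.ofReal b)⁻¹ * ENNReal.ofReal (‖gradient U y‖ ^ 2) ∂(μ ε) :=
            setLIntegral_mono' Metric.isClosed_closedBall.measurableSet hpt
        _ = (ENNReal.ofReal b)⁻¹ *
              ∫⁻ y in Metric.closedBall c r,
                ENNReal.ofReal (‖gradient U y‖ ^ 2) ∂(μ ε) :=
            lintegral_const_mul' _ _ hbinv
        _ ≤ (ENNReal.ofReal b)⁻¹ * I :=
            mul_le_mul_right (lintegral_mono_set
              (fun y hy => hsub (Set.mem_biUnion hc hy))) _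
    have hsum : (∑ c ∈ C₀, ∫⁻ y in Metric.closedBall c r,
        ENNReal.ofReal (‖y - c‖ ^ 2) ∂(μ ε)) ≤
          (C₀.card : ℝ≥0∞) * ((ENNReal.ofReal b)⁻¹ * I) := by
      calc (∑ c ∈ C₀, ∫⁻ y in Metric.closedBall c r,
          ENNReal.ofReal (‖y - c‖ ^ 2) ∂(μ ε))
          ≤ ∑ _c ∈ C₀, (ENNReal.ofReal b)⁻¹ * I := Finset.sum_le_sum hc
        _ = (C₀.card : ℝ≥0∞) * ((ENNReal.ofReal b)⁻¹ * I) := by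
            rw [Finset.sum_const, nsmul_eq_mul]
    calc (ENNReal.ofReal ε)⁻¹ * ∑ c ∈ C₀, ∫⁻ y in Metric.closedBall c r,
          ENNReal.ofReal (‖y - c‖ ^ 2) ∂(μ ε)
        ≤ (ENNReal.ofReal ε)⁻¹ * ((C₀.card : ℝ≥0∞) * ((ENNReal.ofReal b)⁻¹ * I)) :=
          mul_le_mul_right hsum _
      _ = (C₀.card : ℝ≥0∞) * (ENNReal.ofReal b)⁻¹ * ((ENNReal.ofReal ε)⁻¹ * I) := by ring
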